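/- Combining the previous estimates: for A an n×n matrix with singular values σᵢ, p ∈ [1,2], and k ≥ 1, we have sqrt(Σ_{i≥k} σᵢ²) ≤ k^{1/2 - 1/p} · ‖A‖ₚ, i.e., the Frobenius norm of the residual after removing the top k−1 singular values is bounded by k^{1/2−1/p} times the Schatten-p norm. -/

import Mathlib

open Matrix Finset Real

/-- The singular values of a real square matrix: square roots of the
eigenvalues of `Aᴴ * A`. -/
noncomputable def singularValues {n : ℕ} (A : Matrix (Fin n) (Fin n) ℝ) : Fin n → ℝ :=
  fun i => Real.sqrt ((Matrix.isHermitian_conjTranspose_mul_self A).eigenvalues i)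

/-- The Schatten-`p` norm of a real square matrix: the `ℓ^p` norm of its
singular values. -/
noncomputable def schattenNorm {n : ℕ} (A : Matrix (Fin n) (Fin n) ℝ) (p : ℝ) : ℝ :=
  (∑ i, singularValues A i ^ p) ^ (1 / p)

/-- The Frobenius norm of the tail of the singular values is bounded by
`k^{1/2 - 1/p} ‖A‖ₚ`. -/
theorem sqrt_tail_le_rpow_mul_schattenNorm {n : ℕ} (A : Matrix (Fin n) (Fin n) ℝ)
    (σ : Fin n → ℝ) (hσ : ∃ e : Equiv.Perm (Fin n), σ = singularValues A ∘ e)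
    (hmono : Antitone σ) (p : ℝ) (hp1 : 1 ≤ p) (hp2 : p ≤ 2) (k : Fin n) :
    Real.sqrt (∑ i ∈ Finset.Ici k, σ i ^ 2) ≤
      ((k : ℕ) + 1 : ℝ) ^ (1 / 2 - 1 / p) * schattenNorm A p := by
  have hp0 : (0:ℝ) < p := lt_of_lt_of_le one_pos hp1
  have hσ0 : ∀ i, 0 ≤ σ i := by
    obtain ⟨e, he⟩ := hσ
    intro i
    rw [he]
    exact Real.sqrt_nonneg _
  set S := schattenNorm A p with hSdef
  set c := (((k : ℕ) : ℝ) + 1) with hcdef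
  have hc0 : (0:ℝ) < c := by positivity
  set W := ∑ i, σ i ^ p with hWdef
  have hW0 : 0 ≤ W := Finset.sum_nonneg fun i _ => Real.rpow_nonneg (hσ0 i) p
  have hWS : S = W ^ (1/p) := by
    obtain ⟨e, he⟩ := hσ
    rw [hSdef, schattenNorm, hWdef, he]
    congr 1
    exact (Equiv.sum_comp e (fun i => singularValues A i ^ p)).symm
  have hS0 : 0 ≤ S := by rw [hWS]; exact Real.rpow_nonneg hW0 _
  have hSp : S ^ p = W := by
    rw [hWS, ← Real.rpow_mul hW0, one_div, inv_mul_cancel₀ (ne_of_gt hp0), Real.rpow_one]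
  -- step 6 : σ k ^ p * c ≤ W
  have h6 : σ k ^ p * c ≤ W := by
    have h1 : ∑ i ∈ Finset.Iic k, σ k ^ p ≤ ∑ i ∈ Finset.Iic k, σ i ^ p :=
      Finset.sum_le_sum fun i hi =>
        Real.rpow_le_rpow (hσ0 k) (hmono (Finset.mem_Iic.mp hi)) (le_of_lt hp0)
    have h2 : ∑ i ∈ Finset.Iic k, σ i ^ p ≤ W :=
      Finset.sum_le_sum_of_subset_of_nonneg (Finset.subset_univ _)
        (fun i _ _ => Real.rpow_nonneg (hσ0 i) p)
    have h3 : ∑ i ∈ Finset.Iic k, σ k ^ p = σ k ^ p * c := by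
      rw [Finset.sum_const, Fin.card_Iic, nsmul_eq_mul, hcdef]
      push_cast
      ring
    linarith
  -- σ k ≤ S / c^(1/p)
  have hσk : σ k ≤ S / c ^ (1/p) := by
    have h1 : σ k ^ p ≤ S ^ p / c := by
      rw [hSp, le_div_iff₀ hc0]; exact h6
    have h2 : (σ k ^ p) ^ (1/p) ≤ (S ^ p / c) ^ (1/p) :=
      Real.rpow_le_rpow (Real.rpow_nonneg (hσ0 k) p) h1 (by positivity)
    have h3 : (σ k ^ p) ^ (1/p) = σ k := by
      rw [← Real.rpow_mul (hσ0 k), mul_one_div, div_self (ne_of_gt hp0), Real.rpow_one]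
    have h4 : (S ^ p / c) ^ (1/p) = S / c ^ (1/p) := by
      rw [Real.div_rpow (Real.rpow_nonneg hS0 p) (le_of_lt hc0),
        ← Real.rpow_mul hS0, mul_one_div, div_self (ne_of_gt hp0), Real.rpow_one]
    rw [h3, h4] at h2
    exact h2
  -- step B : σ k ^ (2-p) ≤ c^((p-2)/p) * S^(2-p)
  have hB : σ k ^ (2 - p : ℝ) ≤ c ^ ((p-2)/p) * S ^ (2 - p : ℝ) := by
    have h2p : (0:ℝ) ≤ 2 - p := by linarith
    have h1 : σ k ^ (2-p:ℝ) ≤ (S / c ^ (1/p)) ^ (2-p:ℝ) :=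
      Real.rpow_le_rpow (hσ0 k) hσk h2p
    have h2 : (S / c ^ (1/p)) ^ (2-p:ℝ) = c ^ ((p-2)/p) * S ^ (2-p:ℝ) := by
      rw [Real.div_rpow hS0 (Real.rpow_nonneg (le_of_lt hc0) _),
        ← Real.rpow_mul (le_of_lt hc0)]
      rw [div_eq_mul_inv, ← Real.rpow_neg (le_of_lt hc0), mul_comm]
      congr 1
      congr 1
      field_simp
      ring
    rw [h2] at h1
    exact h1
  -- step A : tail sum ≤ σ k ^ (2-p) * W
  have hA : ∑ i ∈ Finset.Ici k, σ i ^ 2 ≤ σ k ^ (2-p:ℝ) * W := by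
    have h1 : ∀ i ∈ Finset.Ici k, σ i ^ 2 ≤ σ k ^ (2-p:ℝ) * σ i ^ p := by
      intro i hi
      have hik : σ i ≤ σ k := hmono (Finset.mem_Ici.mp hi)
      have heq : σ i ^ 2 = σ i ^ (2-p:ℝ) * σ i ^ p := by
        rw [← Real.rpow_add_of_nonneg (hσ0 i) (by linarith) (le_of_lt hp0)]
        norm_num
      rw [heq]
      exact mul_le_mul_of_nonneg_right
        (Real.rpow_le_rpow (hσ0 i) hik (by linarith)) (Real.rpow_nonneg (hσ0 i) p)
    calc ∑ i ∈ Finset.Ici k, σ i ^ 2 ≤ ∑ i ∈ Finset.Ici k, σ k ^ (2-p:ℝ) * σ i ^ p :=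
          Finset.sum_le_sum h1
      _ = σ k ^ (2-p:ℝ) * ∑ i ∈ Finset.Ici k, σ i ^ p := by rw [Finset.mul_sum]
      _ ≤ σ k ^ (2-p:ℝ) * W := by
          apply mul_le_mul_of_nonneg_left _ (Real.rpow_nonneg (hσ0 k) _)
          exact Finset.sum_le_sum_of_subset_of_nonneg (Finset.subset_univ _)
            (fun i _ _ => Real.rpow_nonneg (hσ0 i) p)
  -- combine : tail ≤ c^((p-2)/p) * S^2
  have hT : ∑ i ∈ Finset.Ici k, σ i ^ 2 ≤ c ^ ((p-2)/p) * S ^ 2 := by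
    have h1 : σ k ^ (2-p:ℝ) * W ≤ (c ^ ((p-2)/p) * S ^ (2-p:ℝ)) * W := by
      apply mul_le_mul_of_nonneg_right hB hW0
    have h2 : (c ^ ((p-2)/p) * S ^ (2-p:ℝ)) * W = c ^ ((p-2)/p) * S ^ 2 := by
      rw [← hSp, mul_assoc]
      congr 1
      rw [← Real.rpow_add_of_nonneg hS0 (by linarith) (le_of_lt hp0)]
      norm_num
    rw [h2] at h1
    linarith
  -- final
  have hfin : Real.sqrt (∑ i ∈ Finset.Ici k, σ i ^ 2) ≤
      Real.sqrt (c ^ ((p-2)/p) * S ^ 2) := Real.sqrt_le_sqrt hT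
  have hrhs : Real.sqrt (c ^ ((p-2)/p) * S ^ 2) = c ^ (1/2 - 1/p) * S := by
    rw [Real.sqrt_mul (Real.rpow_nonneg (le_of_lt hc0) _), Real.sqrt_sq hS0,
      Real.sqrt_eq_rpow, ← Real.rpow_mul (le_of_lt hc0)]
    congr 1
    field_simp
  rw [hrhs] at hfin
  exact hfin
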